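/- Let α > 1, b > 0, σ > 0, τ ≥ 0 with 2ατ² < bσ². Then f_α(sqrt(1 + 2τ²/(bσ²))) ≤ α²τ⁴/((α-1)b²σ⁴), where f_α(x) = log x + (1/(2(α-1)))·log(x²/(αx² + 1 - α)). -/

import Mathlib

open Real

lemma log_ge_sub_sq (y : ℝ) (hy : 0 ≤ y) : y - y ^ 2 / 2 ≤ Real.log (1 + y) := by
  have hd : ∀ t ∈ Set.Ioi (0:ℝ), HasDerivAt (fun t : ℝ => Real.log (1 + t) - t + t ^ 2 / 2)
      ((1 + t)⁻¹ - 1 + t) t := by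
    intro t ht
    have h1 : (0:ℝ) < 1 + t := by simp at ht; linarith
    have h2 : HasDerivAt (fun t : ℝ => 1 + t) 1 t := by
      simpa using (hasDerivAt_id t).const_add 1
    have h3 : HasDerivAt (fun t : ℝ => t ^ 2 / 2) t t := by
      simpa using (hasDerivAt_pow 2 t).div_const 2
    simpa [mul_comm] using ((h2.log h1.ne').fun_sub (hasDerivAt_id t)).fun_add h3
  have key : MonotoneOn (fun t : ℝ => Real.log (1 + t) - t + t ^ 2 / 2) (Set.Ici 0) := by
    apply monotoneOn_of_deriv_nonneg (convex_Ici 0)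
    · apply ContinuousOn.add (ContinuousOn.sub (ContinuousOn.log (by fun_prop) ?_) (by fun_prop))
        (by fun_prop)
      intro t ht
      simp at ht; intro h; linarith
    · intro t ht
      rw [interior_Ici] at ht
      exact (hd t ht).differentiableAt.differentiableWithinAt
    · intro t ht
      rw [interior_Ici] at ht
      rw [(hd t ht).deriv]
      have h1 : (0:ℝ) < 1 + t := by simp at ht; linarith
      have h2 : (1:ℝ)/(1+t) - 1 + t = t^2/(1+t) := by field_simp; ring
      rw [inv_eq_one_div, h2]
      positivity
  have := key (Set.self_mem_Ici) (Set.mem_Ici.2 hy) hy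
  simp at this
  linarith

noncomputable def falpha (α x : ℝ) : ℝ :=
  Real.log x + (1 / (2 * (α - 1))) * Real.log (x ^ 2 / (α * x ^ 2 + 1 - α))

theorem falpha_plus_bound (α b σ τ : ℝ) (hα : 1 < α) (hb : 0 < b) (hσ : 0 < σ)
    (hτ : 0 ≤ τ) (hdom : 2 * α * τ ^ 2 < b * σ ^ 2) :
    falpha α (Real.sqrt (1 + 2 * τ ^ 2 / (b * σ ^ 2)))
      ≤ α ^ 2 * τ ^ 4 / ((α - 1) * b ^ 2 * σ ^ 4) := by
  set u : ℝ := 2 * τ ^ 2 / (b * σ ^ 2) with hu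
  have hbs : 0 < b * σ ^ 2 := by positivity
  have hu0 : 0 ≤ u := by positivity
  have hα0 : 0 < α := by linarith
  have h1u : 0 < 1 + u := by linarith
  have h1au : 0 < 1 + α * u := by positivity
  have hsq : Real.sqrt (1 + u) ^ 2 = 1 + u := Real.sq_sqrt h1u.le
  have hden : α * Real.sqrt (1 + u) ^ 2 + 1 - α = 1 + α * u := by rw [hsq]; ring
  have hlog1 : Real.log (1 + u) ≤ u := by
    have := Real.log_le_sub_one_of_pos h1u
    linarith
  have hlog2 : α * u - (α * u) ^ 2 / 2 ≤ Real.log (1 + α * u) :=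
    log_ge_sub_sq (α * u) (by positivity)
  have heq : falpha α (Real.sqrt (1 + u))
      = (α * Real.log (1 + u) - Real.log (1 + α * u)) / (2 * (α - 1)) := by
    rw [falpha, hden, hsq, Real.log_sqrt h1u.le,
      Real.log_div h1u.ne' h1au.ne']
    have hne : α - 1 ≠ 0 := by linarith
    field_simp
    ring
  have hα1 : 0 < α - 1 := by linarith
  have hub : α * Real.log (1 + u) - Real.log (1 + α * u) ≤ (α * u) ^ 2 / 2 := by
    nlinarith
  have hmain : falpha α (Real.sqrt (1 + u)) ≤ (α * u) ^ 2 / (4 * (α - 1)) := by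
    rw [heq]
    rw [div_le_div_iff₀ (by linarith) (by linarith)]
    nlinarith
  refine hmain.trans (le_of_eq ?_)
  rw [hu]
  field_simp
  ring
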